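/- Generalized Kelvin second law: for any cycle A₁ → A₂ → … → A_m → A₁ of states, the sum of ε-risk works over the steps satisfies Σ_{i=1}^{m} W^ε(A_i → A_{i+1}) ≤ W^{mε}(A₁ → A₁) (indices mod m), assuming mε < 1. -/

import Mathlib

open MeasureTheory Set

/-- The set of admissible mixing factors in the definition of relative mixedness. -/
noncomputable def mixSet (f g : ℝ → ℝ) : Set ℝ :=
  {m | 0 < m ∧ ∀ l : ℝ, 0 ≤ l → ∫ x in (0:ℝ)..(l * m), g x ≤ ∫ x in (0:ℝ)..l, f x}

/-- The relative mixedness `M(f‖g)`. -/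
noncomputable def relMix (f g : ℝ → ℝ) : ℝ := sSup (mixSet f g)

/-- The ε-risk extractable work `W^ε(ρ→σ) = kT ln M(G^T(ρ)/(1-ε) ‖ G^T(σ))`,
in terms of the Gibbs-rescaled densities. -/
noncomputable def work (k T ε : ℝ) (ρ σ : ℝ → ℝ) : ℝ :=
  k * T * Real.log (relMix (fun x => ρ x / (1 - ε)) σ)

lemma prod_csSup_le {ι : Type*} [DecidableEq ι] (s : Finset ι) (S : ι → Set ℝ) :
    ∀ C : ℝ,
    (∀ i ∈ s, (S i).Nonempty) →
    (∀ i ∈ s, ∀ x ∈ S i, 0 < x) →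
    (∀ i ∈ s, 0 < sSup (S i)) →
    (∀ g : ι → ℝ, (∀ i ∈ s, g i ∈ S i) → ∏ i ∈ s, g i ≤ C) →
    ∏ i ∈ s, sSup (S i) ≤ C := by
  induction s using Finset.induction_on with
  | empty =>
      intro C _ _ _ h
      simpa using h (fun _ => 1) (by simp)
  | @insert a s ha ih =>
      intro C hne hposS hsup h
      have hPpos : 0 < ∏ i ∈ s, sSup (S i) :=
        Finset.prod_pos fun i hi => hsup i (Finset.mem_insert_of_mem hi)
      rw [Finset.prod_insert ha]
      have hsSa : sSup (S a) ≤ C / ∏ i ∈ s, sSup (S i) := by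
        apply csSup_le (hne a (Finset.mem_insert_self a s))
        intro ma hma
        have hma_pos : 0 < ma := hposS a (Finset.mem_insert_self a s) ma hma
        rw [le_div_iff₀ hPpos]
        have hP : ∏ i ∈ s, sSup (S i) ≤ C / ma := by
          apply ih (C / ma) (fun i hi => hne i (Finset.mem_insert_of_mem hi))
            (fun i hi => hposS i (Finset.mem_insert_of_mem hi))
            (fun i hi => hsup i (Finset.mem_insert_of_mem hi))
          intro g hg
          rw [le_div_iff₀ hma_pos]
          have hupd : ∀ i ∈ insert a s, Function.update g a ma i ∈ S i := by
            intro i hi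
            rcases Finset.mem_insert.1 hi with rfl | hi
            · rw [Function.update_self]; exact hma
            · rw [Function.update_of_ne (ne_of_mem_of_not_mem hi ha)]
              exact hg i hi
          have := h (Function.update g a ma) hupd
          rw [Finset.prod_insert ha, Function.update_self] at this
          have heq : ∏ i ∈ s, Function.update g a ma i = ∏ i ∈ s, g i :=
            Finset.prod_congr rfl fun i hi =>
              Function.update_of_ne (ne_of_mem_of_not_mem hi ha) _ _
          rw [heq] at this
          linarith [this]
        calc ma * ∏ i ∈ s, sSup (S i) ≤ ma * (C / ma) :=
              mul_le_mul_of_nonneg_left hP hma_pos.le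
          _ = C := by field_simp
      calc sSup (S a) * ∏ i ∈ s, sSup (S i)
          ≤ (C / ∏ i ∈ s, sSup (S i)) * ∏ i ∈ s, sSup (S i) :=
            mul_le_mul_of_nonneg_right hsSa hPpos.le
        _ = C := by field_simp

open Fin.NatCast

theorem generalized_kelvin_second_law
    (k T ε : ℝ) (hk : 0 < k) (hT : 0 < T) (hε0 : 0 ≤ ε)
    (m : ℕ) [NeZero m] (hmε : (m : ℝ) * ε < 1)
    (a : Fin m → ℝ → ℝ)
    (ha_anti : ∀ i, AntitoneOn (a i) (Ici 0))
    (ha_nonneg : ∀ i x, 0 ≤ a i x)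
    (ha_int : ∀ i, IntegrableOn (a i) (Ici 0))
    (ha_prob : ∀ i, ∫ x in Set.Ici (0:ℝ), a i x = 1)
    (hpos : ∀ i : Fin m, 0 < relMix (fun x => a i x / (1 - ε)) (a (i + 1)))
    (hbdd : ∀ i : Fin m, BddAbove (mixSet (fun x => a i x / (1 - ε)) (a (i + 1))))
    (hpos0 : 0 < relMix (fun x => a 0 x / (1 - (m : ℝ) * ε)) (a 0))
    (hbdd0 : BddAbove (mixSet (fun x => a 0 x / (1 - (m : ℝ) * ε)) (a 0))) :
    ∑ i : Fin m, work k T ε (a i) (a (i + 1))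
      ≤ work k T ((m : ℝ) * ε) (a 0) (a 0) := by
  have hm1 : (1 : ℝ) ≤ (m : ℝ) := by
    exact_mod_cast Nat.one_le_iff_ne_zero.2 (NeZero.ne m)
  have h1ε : 0 < 1 - ε := by nlinarith
  set S : Fin m → Set ℝ := fun i => mixSet (fun x => a i x / (1 - ε)) (a (i + 1)) with hS
  -- denominators positivity along the chain
  have hden : ∀ kk : ℕ, kk ≤ m → 0 < 1 - (kk : ℝ) * ε := by
    intro kk hkk
    have : (kk : ℝ) * ε ≤ (m : ℝ) * ε :=
      mul_le_mul_of_nonneg_right (by exact_mod_cast hkk) hε0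
    linarith
  -- the chain lemma: any product of admissible factors is admissible for the cycle
  have chain : ∀ g : Fin m → ℝ, (∀ i, g i ∈ S i) →
      (∏ i : Fin m, g i) ∈ mixSet (fun x => a 0 x / (1 - (m : ℝ) * ε)) (a 0) := by
    intro g hg
    have hgpos : ∀ i, 0 < g i := fun i => (hg i).1
    have claim : ∀ kk : ℕ, kk ≤ m → ∀ l : ℝ, 0 ≤ l →
        ∫ x in (0:ℝ)..(l * ∏ i ∈ Finset.range kk, g i), a ((kk : Fin m)) x
          ≤ (∫ x in (0:ℝ)..l, a 0 x) / (1 - (kk : ℝ) * ε) := by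
      intro kk
      induction kk with
      | zero => intro _ l hl; simp
      | succ n ihn =>
          intro hnm l hl
          have hnm' : n ≤ m := Nat.le_of_succ_le hnm
          have hPpos : 0 < ∏ i ∈ Finset.range n, g i :=
            Finset.prod_pos fun i _ => hgpos _
          have hl' : 0 ≤ l * ∏ i ∈ Finset.range n, g i :=
            mul_nonneg hl hPpos.le
          have hint0 : 0 ≤ ∫ x in (0:ℝ)..l, a 0 x :=
            intervalIntegral.integral_nonneg hl fun x _ => ha_nonneg 0 x
          have hdn : 0 < 1 - (n : ℝ) * ε := hden n hnm'
          have hdn1 : 0 < 1 - ((n : ℝ) + 1) * ε := by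
            have := hden (n + 1) hnm; push_cast at this; linarith
          have step := (hg ((n : Fin m))).2 (l * ∏ i ∈ Finset.range n, g i) hl'
          have hidx : ((n : Fin m)) + 1 = ((n + 1 : ℕ) : Fin m) := by push_cast; ring
          rw [intervalIntegral.integral_div] at step
          have ihn' := ihn hnm' l hl
          calc ∫ x in (0:ℝ)..(l * ∏ i ∈ Finset.range (n+1), g i), a (((n+1 : ℕ) : Fin m)) x
              = ∫ x in (0:ℝ)..((l * ∏ i ∈ Finset.range n, g i) * g ((n : Fin m))), a (((n : Fin m)) + 1) x := by
                rw [Finset.prod_range_succ, hidx, mul_assoc]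
            _ ≤ (∫ x in (0:ℝ)..(l * ∏ i ∈ Finset.range n, g i), a ((n : Fin m)) x) / (1 - ε) := step
            _ ≤ ((∫ x in (0:ℝ)..l, a 0 x) / (1 - (n : ℝ) * ε)) / (1 - ε) := by gcongr
            _ = (∫ x in (0:ℝ)..l, a 0 x) / ((1 - (n : ℝ) * ε) * (1 - ε)) := by rw [div_div]
            _ ≤ (∫ x in (0:ℝ)..l, a 0 x) / (1 - ((n : ℝ) + 1) * ε) := by
                have hcomp : 1 - ((n : ℝ) + 1) * ε ≤ (1 - (n : ℝ) * ε) * (1 - ε) := by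
                  have hnε2 : 0 ≤ (n : ℝ) * ε * ε :=
                    mul_nonneg (mul_nonneg (Nat.cast_nonneg n) hε0) hε0
                  nlinarith
                gcongr
            _ = (∫ x in (0:ℝ)..l, a 0 x) / (1 - ((n+1 : ℕ) : ℝ) * ε) := by push_cast; ring_nf
    constructor
    · exact Finset.prod_pos fun i _ => hgpos i
    · intro l hl
      have hfin := claim m le_rfl l hl
      rw [Fin.natCast_self] at hfin
      have hprodeq : ∏ i : Fin m, g i = ∏ i ∈ Finset.range m, g i := by
        rw [← Fin.prod_univ_eq_prod_range (fun j : ℕ => g (j : Fin m)) m]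
        exact Finset.prod_congr rfl fun i _ => by rw [Fin.cast_val_eq_self]
      rw [hprodeq, intervalIntegral.integral_div]
      exact hfin
  -- nonemptiness and positivity of the admissible sets
  have hne : ∀ i : Fin m, (S i).Nonempty := by
    intro i
    rcases (S i).eq_empty_or_nonempty with he | h
    · exfalso
      have := hpos i
      rw [relMix, show mixSet (fun x => a i x / (1 - ε)) (a (i + 1)) = S i from rfl,
        he, Real.sSup_empty] at this
      exact lt_irrefl 0 this
    · exact h
  have key : ∏ i : Fin m, relMix (fun x => a i x / (1 - ε)) (a (i + 1))
      ≤ relMix (fun x => a 0 x / (1 - (m : ℝ) * ε)) (a 0) := by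
    refine prod_csSup_le Finset.univ S _ (fun i _ => hne i)
      (fun i _ x hx => hx.1) (fun i _ => hpos i) ?_
    intro g hg
    exact le_csSup hbdd0 (chain g fun i => hg i (Finset.mem_univ i))
  -- conclude via logarithms
  have hprodpos : 0 < ∏ i : Fin m, relMix (fun x => a i x / (1 - ε)) (a (i + 1)) :=
    Finset.prod_pos fun i _ => hpos i
  have hlog : ∑ i : Fin m, Real.log (relMix (fun x => a i x / (1 - ε)) (a (i + 1)))
      ≤ Real.log (relMix (fun x => a 0 x / (1 - (m : ℝ) * ε)) (a 0)) := by
    rw [← Real.log_prod fun i _ => (hpos i).ne']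
    exact Real.log_le_log hprodpos key
  simp only [work, ← Finset.mul_sum]
  exact mul_le_mul_of_nonneg_left hlog (by positivity)
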